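/- Let 𝒞 be an additive category (a preadditive category with a zero object and binary biproducts). Let P, Q, R, S, T, U be objects of 𝒞 and let a : P → Q, g : P → R, h : Q → S, i : R → S, j : Q → T, k : R → T, m : S → U, ℓ : T → U be morphisms such that h is an isomorphism and such that the sequence P → Q ⊕ R → S ⊕ T → U — with first map having components (a, g), middle map given in matrix form by ((h, i), (j, k)), and last map having components (m, ℓ) — is a cochain complex (i.e. h∘a + i∘g = 0, j∘a + k∘g = 0, m∘h + ℓ∘j = 0, m∘i + ℓ∘k = 0). Then this cochain complex (concentrated in degrees 0, 1, 2, 3, with zero objects in all other degrees) is homotopy equivalent to the cochain complex P → R → T → U with differentials g, k − j∘h⁻¹∘i, and ℓ (also concentrated in degrees 0, 1, 2, 3). -/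

import Mathlib

open CategoryTheory Limits ZeroObject

/-- A cochain complex concentrated in degrees `0, 1, 2, 3`, with given objects and
differentials, and zero objects in all other degrees. -/
noncomputable def fourTermComplex {C : Type*} [Category C] [Preadditive C] [HasZeroObject C]
    (X0 X1 X2 X3 : C) (d0 : X0 ⟶ X1) (d1 : X1 ⟶ X2) (d2 : X2 ⟶ X3)
    (h01 : d0 ≫ d1 = 0) (h12 : d1 ≫ d2 = 0) : CochainComplex C ℤ :=
  CochainComplex.of
    (fun n => match n with
      | 0 => X0
      | 1 => X1
      | 2 => X2
      | 3 => X3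
      | _ => (0 : C))
    (fun n => match n with
      | 0 => d0
      | 1 => d1
      | 2 => d2
      | _ => 0)
    (fun n => by
      match n with
      | 0 => exact h01
      | 1 => exact h12
      | 2 => show d2 ≫ 0 = 0; simp
      | 3 => show (0 : _ ⟶ _) ≫ _ = 0; simp
      | (m : ℕ) + 4 => show (0 : _ ⟶ _) ≫ _ = 0; simp
      | Int.negSucc m => show (0 : _ ⟶ _) ≫ _ = 0; simp)

section Gauss

variable {C : Type*} [Category C] [Preadditive C] [HasZeroObject C] [HasBinaryBiproducts C]
  {P Q R S T U : C} (a : P ⟶ Q) (g : P ⟶ R) (h : Q ⟶ S) (i : R ⟶ S)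
  (j : Q ⟶ T) (k : R ⟶ T) (m : S ⟶ U) (l : T ⟶ U)

/-- The cochain complex `P ⟶ Q ⊞ R ⟶ S ⊞ T ⟶ U`, concentrated in degrees `0, 1, 2, 3`,
whose first differential has components `(a, g)`, whose middle differential is given in matrix
form by `((h, i), (j, k))`, and whose last differential has components `(m, ℓ)`. -/
noncomputable def bigComplex
    (rel1 : a ≫ h + g ≫ i = 0) (rel2 : a ≫ j + g ≫ k = 0)
    (rel3 : h ≫ m + j ≫ l = 0) (rel4 : i ≫ m + k ≫ l = 0) : CochainComplex C ℤ :=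
  fourTermComplex P (Q ⊞ R) (S ⊞ T) U
    (biprod.lift a g)
    (biprod.desc (biprod.lift h j) (biprod.lift i k))
    (biprod.desc m l)
    (by
      rw [biprod.lift_desc]
      ext
      · simpa using rel1
      · simpa using rel2)
    (by
      ext
      · simpa using rel3
      · simpa using rel4)

/-- The reduced cochain complex `P ⟶ R ⟶ T ⟶ U`, concentrated in degrees `0, 1, 2, 3`,
with differentials `g`, `k − j ∘ h⁻¹ ∘ i` and `ℓ`. -/
noncomputable def smallComplex [IsIso h]
    (rel1 : a ≫ h + g ≫ i = 0) (rel2 : a ≫ j + g ≫ k = 0)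
    (rel3 : h ≫ m + j ≫ l = 0) (rel4 : i ≫ m + k ≫ l = 0) : CochainComplex C ℤ :=
  fourTermComplex P R T U
    g (k - i ≫ inv h ≫ j) l
    (by
      have e1 : g ≫ i = -(a ≫ h) := eq_neg_of_add_eq_zero_right rel1
      have e2 : g ≫ k = -(a ≫ j) := eq_neg_of_add_eq_zero_right rel2
      calc g ≫ (k - i ≫ inv h ≫ j)
          = g ≫ k - (g ≫ i) ≫ inv h ≫ j := by
            simp only [Preadditive.comp_sub, Category.assoc]
        _ = -(a ≫ j) - (-(a ≫ h)) ≫ inv h ≫ j := by rw [e1, e2]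
        _ = 0 := by simp)
    (by
      have e3 : j ≫ l = -(h ≫ m) := eq_neg_of_add_eq_zero_right rel3
      have e4 : k ≫ l = -(i ≫ m) := eq_neg_of_add_eq_zero_right rel4
      calc (k - i ≫ inv h ≫ j) ≫ l
          = k ≫ l - i ≫ inv h ≫ (j ≫ l) := by
            simp only [Preadditive.sub_comp, Category.assoc]
        _ = -(i ≫ m) - i ≫ inv h ≫ (-(h ≫ m)) := by rw [e3, e4]
        _ = 0 := by simp)

section GaussAux

variable [IsIso h]
    (rel1 : a ≫ h + g ≫ i = 0) (rel2 : a ≫ j + g ≫ k = 0)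
    (rel3 : h ≫ m + j ≫ l = 0) (rel4 : i ≫ m + k ≫ l = 0)

/-- The map from the big complex to the small one. -/
noncomputable def gaussF :
    bigComplex a g h i j k m l rel1 rel2 rel3 rel4 ⟶
      smallComplex a g h i j k m l rel1 rel2 rel3 rel4 where
  f n := match n with
    | 0 => 𝟙 P
    | 1 => biprod.desc 0 (𝟙 R)
    | 2 => biprod.desc (-(inv h ≫ j)) (𝟙 T)
    | 3 => 𝟙 U
    | _ => 0
  comm' n n' hn := by
    obtain rfl : n' = n + 1 := hn.symm
    dsimp only [bigComplex, smallComplex, fourTermComplex]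
    rw [CochainComplex.of_d, CochainComplex.of_d]
    match n with
    | 0 =>
      show 𝟙 P ≫ g = biprod.lift a g ≫ biprod.desc 0 (𝟙 R)
      simp
    | 1 =>
      show biprod.desc 0 (𝟙 R) ≫ (k - i ≫ inv h ≫ j) =
        biprod.desc (biprod.lift h j) (biprod.lift i k) ≫
          biprod.desc (-(inv h ≫ j)) (𝟙 T)
      ext
      · simp
      · simp; abel
    | 2 =>
      show biprod.desc (-(inv h ≫ j)) (𝟙 T) ≫ l = biprod.desc m l ≫ 𝟙 U
      have e3 : j ≫ l = -(h ≫ m) := eq_neg_of_add_eq_zero_right rel3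
      ext
      · simp [e3]
      · simp
    | 3 =>
      apply (isZero_zero C).eq_of_tgt
    | (p : ℕ) + 4 =>
      apply (isZero_zero C).eq_of_src
    | Int.negSucc p =>
      apply (isZero_zero C).eq_of_src

/-- The map from the small complex to the big one. -/
noncomputable def gaussG :
    smallComplex a g h i j k m l rel1 rel2 rel3 rel4 ⟶
      bigComplex a g h i j k m l rel1 rel2 rel3 rel4 where
  f n := match n with
    | 0 => 𝟙 P
    | 1 => biprod.lift (-(i ≫ inv h)) (𝟙 R)
    | 2 => biprod.lift 0 (𝟙 T)
    | 3 => 𝟙 U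
    | _ => 0
  comm' n n' hn := by
    obtain rfl : n' = n + 1 := hn.symm
    dsimp only [bigComplex, smallComplex, fourTermComplex]
    rw [CochainComplex.of_d, CochainComplex.of_d]
    match n with
    | 0 =>
      show 𝟙 P ≫ biprod.lift a g = g ≫ biprod.lift (-(i ≫ inv h)) (𝟙 R)
      have e1 : g ≫ i = -(a ≫ h) := eq_neg_of_add_eq_zero_right rel1
      ext
      · have : g ≫ i ≫ inv h = -a := by
          rw [← Category.assoc, e1]; simp
        simp [this]
      · simp
    | 1 =>
      show biprod.lift (-(i ≫ inv h)) (𝟙 R) ≫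
          biprod.desc (biprod.lift h j) (biprod.lift i k) =
        (k - i ≫ inv h ≫ j) ≫ biprod.lift 0 (𝟙 T)
      ext
      · simp
      · simp [Preadditive.sub_comp]; abel
    | 2 =>
      show biprod.lift 0 (𝟙 T) ≫ biprod.desc m l = l ≫ 𝟙 U
      simp
    | 3 =>
      apply (isZero_zero C).eq_of_tgt
    | (p : ℕ) + 4 =>
      apply (isZero_zero C).eq_of_src
    | Int.negSucc p =>
      apply (isZero_zero C).eq_of_src


@[simp] lemma gaussF_f0 : (gaussF a g h i j k m l rel1 rel2 rel3 rel4).f 0 = 𝟙 P := rfl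
@[simp] lemma gaussF_f1 : (gaussF a g h i j k m l rel1 rel2 rel3 rel4).f 1 =
    biprod.desc 0 (𝟙 R) := rfl
@[simp] lemma gaussF_f2 : (gaussF a g h i j k m l rel1 rel2 rel3 rel4).f 2 =
    biprod.desc (-(inv h ≫ j)) (𝟙 T) := rfl
@[simp] lemma gaussF_f3 : (gaussF a g h i j k m l rel1 rel2 rel3 rel4).f 3 = 𝟙 U := rfl

@[simp] lemma gaussG_f0 : (gaussG a g h i j k m l rel1 rel2 rel3 rel4).f 0 = 𝟙 P := rfl
@[simp] lemma gaussG_f1 : (gaussG a g h i j k m l rel1 rel2 rel3 rel4).f 1 =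
    biprod.lift (-(i ≫ inv h)) (𝟙 R) := rfl
@[simp] lemma gaussG_f2 : (gaussG a g h i j k m l rel1 rel2 rel3 rel4).f 2 =
    biprod.lift 0 (𝟙 T) := rfl
@[simp] lemma gaussG_f3 : (gaussG a g h i j k m l rel1 rel2 rel3 rel4).f 3 = 𝟙 U := rfl

lemma bigComplex_d01 : (bigComplex a g h i j k m l rel1 rel2 rel3 rel4).d 0 1 =
    biprod.lift a g := by
  dsimp only [bigComplex, fourTermComplex]
  exact CochainComplex.of_d (V := C) (α := ℤ) _ _ 0

lemma bigComplex_d12 : (bigComplex a g h i j k m l rel1 rel2 rel3 rel4).d 1 2 =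
    biprod.desc (biprod.lift h j) (biprod.lift i k) := by
  dsimp only [bigComplex, fourTermComplex]
  exact CochainComplex.of_d (V := C) (α := ℤ) _ _ 1

lemma bigComplex_d23 : (bigComplex a g h i j k m l rel1 rel2 rel3 rel4).d 2 3 =
    biprod.desc m l := by
  dsimp only [bigComplex, fourTermComplex]
  exact CochainComplex.of_d (V := C) (α := ℤ) _ _ 2

end GaussAux

/-- **Gauss elimination** (Bar-Natan).  If `h : Q ⟶ S` is an isomorphism, then the cochain
complex `P ⟶ Q ⊞ R ⟶ S ⊞ T ⟶ U` (concentrated in degrees `0, 1, 2, 3`) with differentials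
`(a, g)`, `((h, i), (j, k))`, `(m, ℓ)` is homotopy equivalent to the cochain complex
`P ⟶ R ⟶ T ⟶ U` (concentrated in degrees `0, 1, 2, 3`) with differentials `g`,
`k − j ∘ h⁻¹ ∘ i`, `ℓ`. -/
theorem gauss_elimination [IsIso h]
    (rel1 : a ≫ h + g ≫ i = 0) (rel2 : a ≫ j + g ≫ k = 0)
    (rel3 : h ≫ m + j ≫ l = 0) (rel4 : i ≫ m + k ≫ l = 0) :
    Nonempty
      (HomotopyEquiv (bigComplex a g h i j k m l rel1 rel2 rel3 rel4)
        (smallComplex a g h i j k m l rel1 rel2 rel3 rel4)) := by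
  refine ⟨⟨gaussF a g h i j k m l rel1 rel2 rel3 rel4,
    gaussG a g h i j k m l rel1 rel2 rel3 rel4, ?_, Homotopy.ofEq ?_⟩⟩
  · -- homotopy from gaussF ≫ gaussG to 𝟙
    refine
      { hom := fun p q =>
          if hc : p = 2 ∧ q = 1 then
            eqToHom (by rw [hc.1]; rfl) ≫
              (-(biprod.desc (inv h ≫ biprod.inl) 0) :
                (bigComplex a g h i j k m l rel1 rel2 rel3 rel4).X 2 ⟶
                  (bigComplex a g h i j k m l rel1 rel2 rel3 rel4).X 1) ≫
              eqToHom (by rw [hc.2]; rfl) else 0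
        zero := ?_
        comm := ?_ }
    · intro p q hpq
      rw [dif_neg]
      rintro ⟨rfl, rfl⟩
      exact hpq rfl
    · intro n
      rw [HomologicalComplex.comp_f, HomologicalComplex.id_f]
      match n with
      | 0 =>
        rw [dNext_eq _ (show (ComplexShape.up ℤ).Rel 0 1 by simp),
          prevD_eq _ (show (ComplexShape.up ℤ).Rel (-1) 0 by simp)]
        rw [dif_neg (by norm_num), dif_neg (by norm_num)]
        rw [show 𝟙 ((bigComplex a g h i j k m l rel1 rel2 rel3 rel4).X 0) = 𝟙 P from rfl]
        simp
        exact (Category.id_comp _).trans (zero_add _).symm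
      | 1 =>
        rw [dNext_eq _ (show (ComplexShape.up ℤ).Rel 1 2 by simp),
          prevD_eq _ (show (ComplexShape.up ℤ).Rel 0 1 by simp)]
        rw [dif_pos ⟨rfl, rfl⟩, dif_neg (by norm_num),
          bigComplex_d12 a g h i j k m l rel1 rel2 rel3 rel4]
        simp only [gaussF_f1, gaussG_f1, eqToHom_refl, Category.id_comp,
          Category.comp_id, zero_comp, comp_zero, add_zero]
        rw [show 𝟙 ((bigComplex a g h i j k m l rel1 rel2 rel3 rel4).X 1) = 𝟙 (Q ⊞ R) from rfl]
        change biprod.desc 0 (𝟙 R) ≫ biprod.lift (-(i ≫ inv h)) (𝟙 R) =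
          biprod.desc (biprod.lift h j) (biprod.lift i k) ≫ 𝟙 (S ⊞ T) ≫
            (-biprod.desc (inv h ≫ biprod.inl) 0) ≫ 𝟙 (Q ⊞ R) + 𝟙 (Q ⊞ R)
        apply biprod.hom_ext' <;> apply biprod.hom_ext <;> simp
        all_goals first
          | exact Category.comp_id _
          | exact Category.id_comp _
          | (rw [show (𝟙 T : _) ≫ biprod.fst = biprod.fst from Category.id_comp _]; simp)
      | 2 =>
        rw [dNext_eq _ (show (ComplexShape.up ℤ).Rel 2 3 by simp),
          prevD_eq _ (show (ComplexShape.up ℤ).Rel 1 2 by simp)]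
        rw [dif_neg (by norm_num), dif_pos ⟨rfl, rfl⟩,
          bigComplex_d12 a g h i j k m l rel1 rel2 rel3 rel4]
        simp only [gaussF_f2, gaussG_f2, eqToHom_refl, Category.id_comp,
          Category.comp_id, comp_zero, zero_comp, zero_add]
        rw [show 𝟙 ((bigComplex a g h i j k m l rel1 rel2 rel3 rel4).X 2) = 𝟙 (S ⊞ T) from rfl]
        change biprod.desc (-(inv h ≫ j)) (𝟙 T) ≫ biprod.lift 0 (𝟙 T) =
          (𝟙 (S ⊞ T) ≫ (-biprod.desc (inv h ≫ biprod.inl) 0) ≫ 𝟙 (Q ⊞ R)) ≫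
            biprod.desc (biprod.lift h j) (biprod.lift i k) + 𝟙 (S ⊞ T)
        apply biprod.hom_ext' <;> apply biprod.hom_ext <;> simp
        all_goals first
          | exact Category.comp_id _
          | exact Category.id_comp _
      | 3 =>
        rw [dNext_eq _ (show (ComplexShape.up ℤ).Rel 3 4 by simp),
          prevD_eq _ (show (ComplexShape.up ℤ).Rel 2 3 by simp)]
        rw [dif_neg (by norm_num), dif_neg (by norm_num)]
        rw [show 𝟙 ((bigComplex a g h i j k m l rel1 rel2 rel3 rel4).X 3) = 𝟙 U from rfl]
        simp
        exact (Category.id_comp _).trans (zero_add _).symm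
      | (p : ℕ) + 4 =>
        apply (isZero_zero C).eq_of_src
      | Int.negSucc p =>
        apply (isZero_zero C).eq_of_src
  · apply HomologicalComplex.hom_ext
    intro n
    rw [HomologicalComplex.comp_f, HomologicalComplex.id_f]
    match n with
    | 0 =>
      show 𝟙 P ≫ 𝟙 P = 𝟙 P
      simp
    | 1 =>
      show biprod.lift (-(i ≫ inv h)) (𝟙 R) ≫ biprod.desc 0 (𝟙 R) = 𝟙 R
      simp
    | 2 =>
      show biprod.lift 0 (𝟙 T) ≫ biprod.desc (-(inv h ≫ j)) (𝟙 T) = 𝟙 T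
      simp
    | 3 =>
      show 𝟙 U ≫ 𝟙 U = 𝟙 U
      simp
    | (p : ℕ) + 4 => apply (isZero_zero C).eq_of_src
    | Int.negSucc p => apply (isZero_zero C).eq_of_src


end Gauss
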